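/- The infinite two-color Tantrix rotation puzzle problem Inf-2-TRP is undecidable: there is no computable function d : ℕ → Bool such that for every e ∈ ℕ for which the e-th partial computable function is total and computes (under the fixed encodings) a function 𝒜 : ℤ² → Option T_2, d(e) = true holds if and only if the rotation puzzle 𝒜 has a solution. -/

import Mathlib

/-- The Tantrix colors used in the tile set. -/
inductive Color where
  | red
  | blue
deriving DecidableEq

/-- A tile is its clockwise color sequence: a word of length 6 over the colors,
edges indexed `0, …, 5` clockwise. -/
abbrev Tile := Fin 6 → Color

/-- Cyclic rotation of a tile by `k` steps: edge `i` of the rotated tile carries the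
color of edge `i + k` of the original sequence.  Two solutions are compared as the
assigned rotated color sequences. -/
def rotTile (k : Fin 6) (t : Tile) : Tile := fun i => t (i + k)

open Color in
/-- The tile set T2: the color sequences bbrrrr, rrbbbb, brrbrr, rbbrbb, rbrrrb, brbbbr, bbbbbb, rrrrrr. -/
def T2 : Set Tile :=
  { ![blue,blue,red,red,red,red],
    ![red,red,blue,blue,blue,blue],
    ![blue,red,red,blue,red,red],
    ![red,blue,blue,red,blue,blue],
    ![red,blue,red,red,red,blue],
    ![blue,red,blue,blue,blue,red],
    ![blue,blue,blue,blue,blue,blue],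
    ![red,red,red,red,red,red] }

/-- The six neighbor offsets of the hexagonal layout of `ℤ²`, listed clockwise
starting from straight up; edge `i` of a tile at `x` is the edge shared with the
neighboring point `x + dirs i`, and opposite directions differ by `3` (mod 6).
Two points are neighbors exactly if their difference is one of these offsets. -/
def dirs : Fin 6 → ℤ × ℤ := ![(0,1), (1,1), (1,0), (0,-1), (-1,-1), (-1,0)]

/-- An explicit numeric code for a color. -/
def Color.toNat : Color → ℕ
  | .red => 0
  | .blue => 1

/-- An explicit encoding of tiles into `ℕ`. -/
def encTile (t : Tile) : ℕ :=
  ∑ i : Fin 6, (t i).toNat * 3 ^ (i : ℕ)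


/-- Tiles belonging to the tile set `T2`. -/
abbrev SetTile := {t : Tile // t ∈ T2}

/-- An explicit encoding of `Option SetTile` into `ℕ`. -/
def encOptTile : Option SetTile → ℕ
  | none => 0
  | some t => encTile t.1 + 1

/-- `sol` is a solution of the (possibly infinite) rotation-puzzle instance
`A : ℤ × ℤ → Option SetTile`: it assigns to each occupied point a cyclic rotation
of the tile placed there, such that for every pair of neighboring occupied points
the two assigned sequences give the same color to their joint edge (edge `d` of
the tile at `x` is glued to edge `d + 3` of the tile at `x + dirs d`). -/
def InfSolution (A : ℤ × ℤ → Option SetTile) (sol : ℤ × ℤ → Option Tile) : Prop :=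
  (∀ x, (A x = none → sol x = none) ∧
    (∀ t : SetTile, A x = some t → ∃ k : Fin 6, sol x = some (rotTile k t.1))) ∧
  (∀ (x : ℤ × ℤ) (d : Fin 6) (s s' : Tile),
    sol x = some s → sol (x + dirs d) = some s' → s d = s' (d + 3))

open Nat.Partrec Nat.Partrec.Code Encodable Denumerable Color

def tBlue : SetTile := ⟨![blue,blue,blue,blue,blue,blue], by simp [T2]⟩
def tRed : SetTile := ⟨![red,red,red,red,red,red], by simp [T2]⟩

def hb (n : ℕ) (x : ℤ × ℤ) : Bool :=
  (decide (x.2 = 0) || decide (x.2 = 1)) &&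
    (evaln (encode x.1) (ofNat Nat.Partrec.Code n) 0).isSome

def instA (n : ℕ) (x : ℤ × ℤ) : Option SetTile :=
  bif hb n x then some (bif decide (x.2 = 0) then tBlue else tRed) else none

def hfun (n m : ℕ) : ℕ :=
  (decode (α := ℤ × ℤ) m).casesOn 0 fun x =>
    bif hb n x then
      (bif decide (x.2 = 0) then encOptTile (some tBlue) else encOptTile (some tRed))
    else 0

lemma hfun_encode (n : ℕ) (x : ℤ × ℤ) : hfun n (encode x) = encOptTile (instA n x) := by
  simp only [hfun, instA, encodek]
  cases hb n x <;> cases h : decide (x.2 = 0) <;> simp [encOptTile, h]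

lemma hb_prim : Primrec₂ hb := by
  have h1 : PrimrecPred fun p : ℕ × (ℤ × ℤ) => p.2.2 = 0 :=
    Primrec.eq.comp (Primrec.snd.comp .snd) (.const 0)
  have h2 : PrimrecPred fun p : ℕ × (ℤ × ℤ) => p.2.2 = 1 :=
    Primrec.eq.comp (Primrec.snd.comp .snd) (.const 1)
  have h3 : Primrec fun p : ℕ × (ℤ × ℤ) =>
      (evaln (encode p.2.1) (ofNat Nat.Partrec.Code p.1) 0).isSome :=
    Primrec.option_isSome.comp <| Code.primrec_evaln.comp <|
      ((Primrec.encode.comp (Primrec.fst.comp .snd)).pair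
        ((Primrec.ofNat _).comp .fst)).pair (.const 0)
  exact (Primrec.cond (Primrec.cond h1.decide (.const true) h2.decide) h3 (.const false)).to₂.of_eq
    (by intro p x; simp [hb])

lemma hfun_prim : Primrec₂ hfun := by
  have hinner : Primrec₂ fun (p : ℕ × ℕ) (x : ℤ × ℤ) =>
      bif hb p.1 x then
        (bif decide (x.2 = 0) then encOptTile (some tBlue) else encOptTile (some tRed))
      else 0 :=
    (Primrec.cond (hb_prim.comp (Primrec.fst.comp .fst) .snd)
      (Primrec.cond (Primrec.eq.comp (Primrec.snd.comp .snd) (.const 0)).decide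
        (.const _) (.const _)) (.const 0)).to₂
  exact ((Primrec.option_casesOn (Primrec.decode.comp .snd) (.const 0) hinner).to₂).of_eq
    (by intro n m; rfl)

lemma exists_c : ∃ c : Nat.Partrec.Code,
    ∀ n m, (curry c n).eval m = Part.some (hfun n m) := by
  have hF : Primrec fun m : ℕ => hfun m.unpair.1 m.unpair.2 :=
    hfun_prim.comp (Primrec.fst.comp .unpair) (Primrec.snd.comp .unpair)
  have : Nat.Partrec fun m : ℕ => (Part.some (hfun m.unpair.1 m.unpair.2) : Part ℕ) :=
    Partrec.nat_iff.mp hF.to_comp.partrec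
  obtain ⟨c, hc⟩ := exists_code.mp this
  refine ⟨c, fun n m => ?_⟩
  rw [eval_curry, hc]
  simp

lemma rot_const (k : Fin 6) (co : Color) (t : Tile) (h : ∀ i, t i = co) (i : Fin 6) :
    rotTile k t i = co := h _

lemma sol_iff (n : ℕ) :
    (∃ sol, InfSolution (instA n) sol) ↔ ¬ ((ofNat Nat.Partrec.Code n).eval 0).Dom := by
  constructor
  · rintro ⟨sol, hsol⟩ hdom
    obtain ⟨v, hv⟩ := Part.dom_iff_mem.mp hdom
    obtain ⟨k, hk⟩ := evaln_complete.mp hv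
    set z : ℤ := ofNat ℤ k with hz
    have hez : encode z = k := by rw [hz]; exact Denumerable.encode_ofNat k
    have hsome : (evaln (encode z) (ofNat Nat.Partrec.Code n) 0).isSome := by
      rw [hez]; exact Option.isSome_iff_exists.mpr ⟨v, hk⟩
    have hA0 : instA n (z, 0) = some tBlue := by
      simp [instA, hb, hsome]
    have hA1 : instA n (z, 1) = some tRed := by
      simp [instA, hb, hsome]
    obtain ⟨k0, hk0⟩ := (hsol.1 (z, 0)).2 tBlue hA0
    obtain ⟨k1, hk1⟩ := (hsol.1 (z, 1)).2 tRed hA1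
    have hnbr : (z, (0:ℤ)) + dirs 0 = (z, 1) := by
      show (z, (0:ℤ)) + ((0:ℤ), (1:ℤ)) = (z, 1)
      simp [Prod.ext_iff]
    have := hsol.2 (z, 0) 0 _ _ hk0 (by rw [hnbr]; exact hk1)
    rw [rot_const k0 blue tBlue.1 (by decide)] at this
    rw [rot_const k1 red tRed.1 (by decide)] at this
    exact Color.noConfusion this
  · intro hdom
    have hAnone : ∀ x, instA n x = Option.none := by
      intro x
      have : ¬ (evaln (encode x.1) (ofNat Nat.Partrec.Code n) 0).isSome := by
        intro h
        obtain ⟨v, hv⟩ := Option.isSome_iff_exists.mp h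
        exact hdom (Part.dom_iff_mem.mpr ⟨v, evaln_sound hv⟩)
      simp [instA, hb, this]
    refine ⟨fun _ : ℤ × ℤ => (Option.none : Option Tile), ⟨fun x => ⟨fun _ => rfl, fun t ht => ?_⟩, fun x d s s' hs => ?_⟩⟩
    · rw [hAnone x] at ht; exact absurd ht.symm (Option.some_ne_none _)
    · exact absurd hs.symm (Option.some_ne_none _)

/-- the infinite two-color Tantrix rotation puzzle problem
`Inf-2-TRP` is undecidable: there is no computable `d : ℕ → Bool` such that whenever
the `e`-th partial computable function (in the standard enumeration by
`Nat.Partrec.Code`) is total and computes, under the fixed encodings, a function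
`A : ℤ × ℤ → Option SetTile`, then `d e = true` holds iff the rotation puzzle `A` has a
solution. -/
theorem inf_trp_undecidable :
    ¬ ∃ d : ℕ → Bool, Computable d ∧
      ∀ (e : ℕ) (A : ℤ × ℤ → Option SetTile),
        (∀ m : ℕ, ((Denumerable.ofNat Nat.Partrec.Code e).eval m).Dom) →
        (∀ x : ℤ × ℤ,
          (Denumerable.ofNat Nat.Partrec.Code e).eval (Encodable.encode x) =
            Part.some (encOptTile (A x))) →
        (d e = true ↔ ∃ sol : ℤ × ℤ → Option Tile, InfSolution A sol) := by
  rintro ⟨d, hd, hspec⟩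
  obtain ⟨c, hc⟩ := exists_c
  have key : ∀ n : ℕ, d (encode (curry c n)) = true ↔
      ∃ sol, InfSolution (instA n) sol := by
    intro n
    refine hspec (encode (curry c n)) (instA n) (fun m => ?_) (fun x => ?_)
    · rw [ofNat_encode, hc]; trivial
    · rw [ofNat_encode, hc, hfun_encode]
  apply ComputablePred.halting_problem 0
  rw [ComputablePred.computable_iff]
  refine ⟨fun cd => ! d (encode (curry c (encode cd))), ?_, ?_⟩
  · have hmap : Computable fun cd : Nat.Partrec.Code => encode (curry c (encode cd)) :=
      (Primrec.encode.comp (primrec₂_curry.comp (.const c) Primrec.encode)).to_comp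
    exact ((Primrec.dom_finite Bool.not).to_comp).comp (hd.comp hmap)
  · funext cd
    have h1 := key (encode cd)
    have h2 := sol_iff (encode cd)
    rw [ofNat_encode] at h2
    by_cases hD : (cd.eval 0).Dom
    · simp only [hD, iff_true]
      have : ¬ d (encode (curry c (encode cd))) = true := fun h =>
        (h2.mp (h1.mp h)) hD
      simp [Bool.not_eq_true'] at this ⊢
      exact this
    · simp only [hD, iff_false]
      have : d (encode (curry c (encode cd))) = true := h1.mpr (h2.mpr hD)
      simp [this]
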